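/- In a faithful maniplex of rank 4, every 1-face and every 2-face is bipartite. -/
import Mathlib



/-- The orbit of a flag `u` under the subgroup generated by `{r j : j ∈ J}`. -/
def MOrbit {n : ℕ} {F : Type*} (r : Fin n → Equiv.Perm F) (J : Set (Fin n)) (u : F) :
    Set F :=
  {v | ∃ g ∈ Subgroup.closure (r '' J), v = g u}

/-- `(F, r)` is a maniplex of rank `n`. -/
def IsManiplex {F : Type*} (n : ℕ) (r : Fin n → Equiv.Perm F) : Prop :=
  Nonempty F ∧
  (∀ (i : Fin n) (u : F), r i (r i u) = u) ∧
  (∀ (i : Fin n) (u : F), r i u ≠ u) ∧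
  (∀ u v : F, v ∈ MOrbit r Set.univ u) ∧
  ∀ i j : Fin n, 1 < |(i : ℤ) - (j : ℤ)| →
    (∀ u : F, r i (r j (r i (r j u))) = u) ∧ ∀ u : F, r i (r j u) ≠ u

/-- The `i`-face containing the flag `u`. -/
def MFace {n : ℕ} {F : Type*} (r : Fin n → Equiv.Perm F) (i : Fin n) (u : F) : Set F :=
  MOrbit r {i}ᶜ u

/-- A maniplex is faithful if the intersection of all faces containing a flag is a singleton. -/
def IsFaithful {n : ℕ} {F : Type*} (r : Fin n → Equiv.Perm F) : Prop :=
  ∀ u : F, (⋂ i : Fin n, MFace r i u) = {u}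

/-- `O` is a face of rank `k ∈ {-1, …, n}`, where the improper ranks `-1` and `n`
give the whole flag set. -/
def IsRankFace {n : ℕ} {F : Type*} (r : Fin n → Equiv.Perm F) (k : ℤ) (O : Set F) : Prop :=
  ((∃ i : Fin n, (i : ℤ) = k) ∧ ∃ u : F, O = MOrbit r {j : Fin n | (j : ℤ) ≠ k} u) ∨
  ((¬ ∃ i : Fin n, (i : ℤ) = k) ∧ O = Set.univ)

/-- A maniplex is thin if any incident pair of an `(i-1)`-face and `(i+1)`-face lies in
exactly two `i`-faces. -/
def IsThin {n : ℕ} {F : Type*} (r : Fin n → Equiv.Perm F) : Prop :=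
  ∀ (i : Fin n) (Fm Fp : Set F),
    IsRankFace r ((i : ℤ) - 1) Fm → IsRankFace r ((i : ℤ) + 1) Fp →
    (Fm ∩ Fp).Nonempty →
    ∃ O₁ O₂ : Set F, O₁ ≠ O₂ ∧
      {O : Set F | (∃ u : F, O = MFace r i u) ∧ (O ∩ (Fm ∩ Fp)).Nonempty} = {O₁, O₂}

/-- The component intersection property. -/
def HasCIP {n : ℕ} {F : Type*} (r : Fin n → Equiv.Perm F) : Prop :=
  ∀ (k : ℕ) (j : Fin k → Fin n) (H : Fin k → Set F),
    Function.Injective j →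
    (∀ l, ∃ u : F, H l = MFace r (j l) u) →
    (∀ l m, (H l ∩ H m).Nonempty) →
    ∀ u v : F, u ∈ ⋂ l, H l → v ∈ ⋂ l, H l →
      v ∈ MOrbit r {m : Fin n | m ∉ Set.range j} u

/-- An automorphism of a maniplex: a permutation of the flags commuting with every `r i`. -/
def IsManiplexAuto {n : ℕ} {F : Type*} (r : Fin n → Equiv.Perm F) (φ : Equiv.Perm F) : Prop :=
  ∀ (i : Fin n) (u : F), φ (r i u) = r i (φ u)

/-- A maniplex is regular if its automorphism group is transitive on flags. -/
def IsRegularManiplex {n : ℕ} {F : Type*} (r : Fin n → Equiv.Perm F) : Prop :=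
  ∀ u v : F, ∃ φ : Equiv.Perm F, IsManiplexAuto r φ ∧ φ u = v

/-- A face `H`, an orbit of the subgroup generated by `{r j : j ∈ J}`, is bipartite. -/
def FaceBipartite {n : ℕ} {F : Type*} (r : Fin n → Equiv.Perm F) (J : Set (Fin n))
    (H : Set F) : Prop :=
  ∃ f : F → ZMod 2, ∀ j ∈ J, ∀ x ∈ H, f (r j x) = f x + 1

/-- The number of `i`-faces of a maniplex. -/
noncomputable def NumFaces {n : ℕ} {F : Type*} (r : Fin n → Equiv.Perm F) (i : Fin n) : ℕ :=
  {O : Set F | ∃ u : F, O = MFace r i u}.ncard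

/-- The canonical double cover of a maniplex. -/
def cdc {n : ℕ} {F : Type*} (r : Fin n → Equiv.Perm F) (i : Fin n) :
    Equiv.Perm (F × ZMod 2) :=
  Equiv.prodCongr (r i) (Equiv.addRight (1 : ZMod 2))

/-- The raviolo of a maniplex of rank `n`: a maniplex of rank `n+1` with two facets. -/
def raviolo {n : ℕ} {F : Type*} (r : Fin n → Equiv.Perm F) (i : Fin (n + 1)) :
    Equiv.Perm (F × ZMod 2) :=
  if h : (i : ℕ) < n then Equiv.prodCongr (r ⟨i, h⟩) (Equiv.refl (ZMod 2))
  else Equiv.prodCongr (Equiv.refl F) (Equiv.addRight (1 : ZMod 2))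

/-- A voltage assignment on a maniplex. -/
def IsVoltage {n : ℕ} {F : Type*} {G : Type*} [Group G] (r : Fin n → Equiv.Perm F)
    (ζ : F × Fin n → G) : Prop :=
  ∀ (u : F) (i : Fin n), ζ (r i u, i) = (ζ (u, i))⁻¹

/-- The permutations of the derived cover of a maniplex with voltage assignment `ζ`. -/
def mcov {n : ℕ} {F : Type*} {G : Type*} [Group G] (r : Fin n → Equiv.Perm F)
    (ζ : F × Fin n → G) (i : Fin n) : Equiv.Perm (F × G) where
  toFun p := (r i p.1, ζ (p.1, i) * p.2)
  invFun p := ((r i).symm p.1, (ζ ((r i).symm p.1, i))⁻¹ * p.2)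
  left_inv p := by simp
  right_inv p := by simp


section AuxStmt3

lemma stmt3_sq_one_inv {G : Type*} [Group G] {g : G} (h : g * g = 1) : g⁻¹ = g :=
  inv_eq_of_mul_eq_one_right h

lemma stmt3_reverse_prod_inv {G : Type*} [Group G] :
    ∀ (L : List G), (∀ g ∈ L, g * g = 1) → L.reverse.prod = L.prod⁻¹ := by
  intro L
  induction L with
  | nil => simp
  | cons a T ih =>
    intro h
    have ha : a * a = 1 := h a (by simp)
    rw [List.reverse_cons, List.prod_append, List.prod_cons, List.prod_cons,
      ih (fun g hg => h g (by simp [hg])), List.prod_nil, mul_one, mul_inv_rev,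
      stmt3_sq_one_inv ha]

lemma stmt3_s_zpow {G : Type*} [Group G] {s t : G} (hs : s * s = 1) (ht : t * t = 1) (k : ℤ) :
    s * (s * t) ^ k = (s * t) ^ (-k) * s := by
  have hsi : s⁻¹ = s := stmt3_sq_one_inv hs
  have hconj : s * (s * t) * s⁻¹ = (s * t)⁻¹ := by
    rw [hsi, mul_inv_rev, stmt3_sq_one_inv hs, stmt3_sq_one_inv ht]
    calc s * (s * t) * s = (s * s) * (t * s) := by group
    _ = t * s := by rw [hs, one_mul]
  have h2 : s * (s * t) ^ k * s⁻¹ = (s * t) ^ (-k) := by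
    have := map_zpow (MulAut.conj s) (s * t) k
    simp only [MulAut.conj_apply] at this
    rw [this, hconj, inv_zpow, zpow_neg]
  calc s * (s * t) ^ k = (s * (s * t) ^ k * s⁻¹) * s := by group
  _ = (s * t) ^ (-k) * s := by rw [h2]

lemma stmt3_t_zpow {G : Type*} [Group G] {s t : G} (hs : s * s = 1) (ht : t * t = 1) (k : ℤ) :
    t * (s * t) ^ k = (s * t) ^ (-(k+1)) * s := by
  have h1 : s * (s * t) ^ (k + 1) = t * (s * t) ^ k := by
    rw [show k + 1 = 1 + k by ring, zpow_add, zpow_one, ← mul_assoc, ← mul_assoc, hs, one_mul]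
  rw [← h1, stmt3_s_zpow hs ht]

lemma stmt3_dihedral_form {G : Type*} [Group G] {s t : G} (hs : s * s = 1) (ht : t * t = 1) :
    ∀ L : List G, (∀ g ∈ L, g = s ∨ g = t) →
      (Even L.length → ∃ k : ℤ, L.prod = (s * t) ^ k) ∧
      (¬ Even L.length → ∃ k : ℤ, L.prod = (s * t) ^ k * s) := by
  intro L
  induction L with
  | nil => intro _; exact ⟨fun _ => ⟨0, by simp⟩, fun h => absurd (by simp) h⟩
  | cons a T ih =>
    intro h
    have haT := h a (by simp)
    obtain ⟨ihE, ihO⟩ := ih (fun g hg => h g (by simp [hg]))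
    constructor
    · intro hE
      rw [List.length_cons, Nat.even_add_one] at hE
      obtain ⟨k, hk⟩ := ihO hE
      rcases haT with ha | ha
      · refine ⟨-k, ?_⟩
        rw [List.prod_cons, hk, ha, ← mul_assoc, stmt3_s_zpow hs ht, mul_assoc, hs, mul_one]
      · refine ⟨-(k+1), ?_⟩
        rw [List.prod_cons, hk, ha, ← mul_assoc, stmt3_t_zpow hs ht, mul_assoc, hs, mul_one]
    · intro hO
      rw [List.length_cons, Nat.even_add_one, not_not] at hO
      obtain ⟨k, hk⟩ := ihE hO
      rcases haT with ha | ha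
      · exact ⟨-k, by rw [List.prod_cons, hk, ha, stmt3_s_zpow hs ht]⟩
      · exact ⟨-(k+1), by rw [List.prod_cons, hk, ha, stmt3_t_zpow hs ht]⟩

lemma stmt3_odd_conj {G : Type*} [Group G] {s t : G} (hs : s * s = 1) (ht : t * t = 1)
    (L : List G) (hL : ∀ g ∈ L, g = s ∨ g = t) (hodd : ¬ Even L.length) :
    ∃ (h x : G), (x = s ∨ x = t) ∧ L.prod = h * x * h⁻¹ := by
  obtain ⟨k, hk⟩ := (stmt3_dihedral_form hs ht L hL).2 hodd
  rcases Int.even_or_odd k with ⟨m, hm⟩ | ⟨m, hm⟩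
  · refine ⟨(s*t)^m, s, Or.inl rfl, ?_⟩
    rw [hk, hm, ← zpow_neg, mul_assoc,
      show s * ((s*t):G)^(-m) = (s*t)^m * s from by rw [stmt3_s_zpow hs ht, neg_neg],
      ← mul_assoc, ← zpow_add, show m + m = 2*m from by ring]
  · refine ⟨(s*t)^m * s, t, Or.inr rfl, ?_⟩
    have hsi : s⁻¹ = s := stmt3_sq_one_inv hs
    rw [hk, hm, mul_inv_rev, hsi, ← zpow_neg, mul_assoc,
      show s * ((s*t):G)^(-m) = (s*t)^m * s from by rw [stmt3_s_zpow hs ht, neg_neg]]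
    rw [← mul_assoc t, stmt3_t_zpow hs ht, mul_assoc ((s*t:G)^(-(m+1))), hs, mul_one,
      mul_assoc (((s*t):G)^m) s, stmt3_s_zpow hs ht, neg_neg, ← mul_assoc, ← zpow_add]
    congr 1
    ring

lemma stmt3_odd_no_fix {F : Type*} {s t : Equiv.Perm F} (hs : s * s = 1) (ht : t * t = 1)
    (hfs : ∀ x, s x ≠ x) (hft : ∀ x, t x ≠ x)
    (L : List (Equiv.Perm F)) (hL : ∀ g ∈ L, g = s ∨ g = t) (hodd : ¬ Even L.length)
    (y : F) : L.prod y ≠ y := by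
  obtain ⟨h, x, hx, hprod⟩ := stmt3_odd_conj hs ht L hL hodd
  intro hy
  rw [hprod] at hy
  have : x (h⁻¹ y) = h⁻¹ y := by
    have := congrArg (h⁻¹ : Equiv.Perm F) hy
    simpa [Equiv.Perm.mul_apply] using this
  rcases hx with rfl | rfl
  · exact hfs _ this
  · exact hft _ this

lemma stmt3_extract_central {F : Type*} {c s t : Equiv.Perm F}
    (hcs : Commute c s) (hct : Commute c t) :
    ∀ L : List (Equiv.Perm F), (∀ g ∈ L, g = c ∨ g = s ∨ g = t) →
      ∃ (a : ℕ) (M : List (Equiv.Perm F)), (∀ g ∈ M, g = s ∨ g = t) ∧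
        a + M.length = L.length ∧ L.prod = c ^ a * M.prod := by
  intro L
  induction L with
  | nil => exact fun _ => ⟨0, [], by simp, by simp, by simp⟩
  | cons g T ih =>
    intro h
    obtain ⟨a, M, hM, hlen, hprod⟩ := ih (fun g hg => h g (by simp [hg]))
    rcases h g (by simp) with rfl | hg
    · exact ⟨a + 1, M, hM, by simp [← hlen]; omega, by
        rw [List.prod_cons, hprod, ← mul_assoc, ← pow_succ']⟩
    · refine ⟨a, g :: M, fun p hp => by
        rcases List.mem_cons.1 hp with rfl | hp
        exacts [hg, hM p hp], by simp [← hlen]; omega, ?_⟩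
      have hcomm : Commute g (c ^ a) := by
        rcases hg with rfl | rfl
        exacts [(hcs.symm.pow_right a), (hct.symm.pow_right a)]
      rw [List.prod_cons, List.prod_cons, hprod, ← mul_assoc, hcomm.eq, mul_assoc]

lemma stmt3_key_even {F : Type*} {c s t : Equiv.Perm F}
    (hc : c * c = 1) (hs : s * s = 1) (ht : t * t = 1)
    (hcs : Commute c s) (hct : Commute c t)
    (hfs : ∀ x, s x ≠ x) (hft : ∀ x, t x ≠ x)
    (Hfaith : ∀ (M : List (Equiv.Perm F)), (∀ g ∈ M, g = s ∨ g = t) → ∀ x, M.prod x ≠ c x) :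
    ∀ L : List (Equiv.Perm F), (∀ g ∈ L, g = c ∨ g = s ∨ g = t) →
      ∀ x, L.prod x = x → Even L.length := by
  intro L hL x hfix
  obtain ⟨a, M, hM, hlen, hprod⟩ := stmt3_extract_central hcs hct L hL
  rcases Nat.even_or_odd a with ⟨m, hm⟩ | ⟨m, hm⟩
  · have hca : c ^ a = 1 := by
      rw [hm, show m + m = 2 * m by ring, pow_mul, sq, hc, one_pow]
    rw [hprod, hca, one_mul] at hfix
    have hMeven : Even M.length := by
      by_contra hodd
      exact stmt3_odd_no_fix hs ht hfs hft M hM hodd x hfix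
    rw [← hlen]
    exact (Even.add (⟨m, hm⟩) hMeven)
  · exfalso
    have hca : c ^ a = c := by
      rw [hm, pow_succ, pow_mul, sq, hc, one_pow, one_mul]
    rw [hprod, hca] at hfix
    have : M.prod x = c x := by
      have := congrArg (c : Equiv.Perm F) hfix
      rw [Equiv.Perm.mul_apply] at this
      rw [← this]
      have : ∀ y, c (c y) = y := fun y => by
        have := congrFun (congrArg (↑· : Equiv.Perm F → F → F) hc) y
        simpa [Equiv.Perm.mul_apply] using this
      rw [this]
    exact Hfaith M hM x this

lemma stmt3_mem_closure_list {G : Type*} [Group G] {S : Set G} (hS : ∀ p ∈ S, p * p = 1) {g : G}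
    (hg : g ∈ Subgroup.closure S) : ∃ L : List G, (∀ q ∈ L, q ∈ S) ∧ g = L.prod := by
  induction hg using Subgroup.closure_induction with
  | mem p hp => exact ⟨[p], by simp [hp], by simp⟩
  | one => exact ⟨[], by simp, by simp⟩
  | mul x y hx hy ihx ihy =>
    obtain ⟨L1, h1, rfl⟩ := ihx
    obtain ⟨L2, h2, rfl⟩ := ihy
    exact ⟨L1 ++ L2, fun q hq => by
      rcases List.mem_append.1 hq with h | h
      exacts [h1 q h, h2 q h], (List.prod_append).symm⟩
  | inv x hx ihx =>
    obtain ⟨L, h1, rfl⟩ := ihx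
    exact ⟨L.reverse, fun q hq => h1 q (List.mem_reverse.1 hq),
      (stmt3_reverse_prod_inv L (fun p hp => hS p (h1 p hp))).symm⟩

end AuxStmt3

/-- In a faithful maniplex of rank `4`, every `1`-face and every `2`-face is bipartite. -/
theorem stmt3 {F : Type*} [Fintype F] (r : Fin 4 → Equiv.Perm F)
    (hM : IsManiplex 4 r) (hf : IsFaithful r)
    (i : Fin 4) (hi : i = 1 ∨ i = 2) (u : F) :
    FaceBipartite r {i}ᶜ (MFace r i u) := by
  classical
  obtain ⟨ci, si, ti, hcover, hcii, hsii, htii, hsc, htc, hd1, hd2⟩ :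
      ∃ ci si ti : Fin 4, (∀ j : Fin 4, j ≠ i → (j = ci ∨ j = si ∨ j = ti)) ∧
        ci ≠ i ∧ si ≠ i ∧ ti ≠ i ∧ si ≠ ci ∧ ti ≠ ci ∧
        1 < |(ci : ℤ) - (si : ℤ)| ∧ 1 < |(ci : ℤ) - (ti : ℤ)| := by
    rcases hi with rfl | rfl
    · exact ⟨0, 2, 3, by decide, by decide, by decide, by decide, by decide, by decide,
        by decide, by decide⟩
    · exact ⟨3, 0, 1, by decide, by decide, by decide, by decide, by decide, by decide,
        by decide, by decide⟩
  obtain ⟨-, hinv, hfpf, -, hcond⟩ := hM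
  have hsq : ∀ j : Fin 4, r j * r j = 1 := fun j => Equiv.ext fun x => by
    simpa [Equiv.Perm.mul_apply] using hinv j x
  have hcomm : ∀ j : Fin 4, 1 < |(ci : ℤ) - (j : ℤ)| → Commute (r ci) (r j) := by
    intro j hjd
    have h2 : (r ci * r j) * (r ci * r j) = 1 := Equiv.ext fun x => by
      simpa [Equiv.Perm.mul_apply] using (hcond ci j hjd).1 x
    calc r ci * r j = (r ci * r j)⁻¹ := (stmt3_sq_one_inv h2).symm
    _ = (r j)⁻¹ * (r ci)⁻¹ := mul_inv_rev _ _
    _ = r j * r ci := by rw [stmt3_sq_one_inv (hsq j), stmt3_sq_one_inv (hsq ci)]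
  have hcs : Commute (r ci) (r si) := hcomm si hd1
  have hct : Commute (r ci) (r ti) := hcomm ti hd2
  have Hfaith : ∀ (M : List (Equiv.Perm F)), (∀ g ∈ M, g = r si ∨ g = r ti) →
      ∀ x, M.prod x ≠ r ci x := by
    intro M hMl x hcontra
    have hmem : r ci x ∈ ⋂ m, MFace r m x := by
      rw [Set.mem_iInter]
      intro m
      by_cases hm : m = ci
      · subst hm
        refine ⟨M.prod, ?_, hcontra.symm⟩
        refine Subgroup.list_prod_mem _ (fun g hg => Subgroup.subset_closure ?_)
        rcases hMl g hg with rfl | rfl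
        · exact ⟨si, hsc, rfl⟩
        · exact ⟨ti, htc, rfl⟩
      · exact ⟨r ci, Subgroup.subset_closure ⟨ci, fun h => hm (by simpa using h.symm), rfl⟩, rfl⟩
    rw [hf x] at hmem
    exact hfpf ci x hmem
  have key := stmt3_key_even (hsq ci) (hsq si) (hsq ti) hcs hct (hfpf si) (hfpf ti) Hfaith
  have hSsq : ∀ p ∈ r '' ({i}ᶜ : Set (Fin 4)), p * p = 1 := by
    rintro p ⟨j, -, rfl⟩; exact hsq j
  have hS3 : ∀ p ∈ r '' ({i}ᶜ : Set (Fin 4)), p = r ci ∨ p = r si ∨ p = r ti := by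
    rintro p ⟨j, hj, rfl⟩
    rcases hcover j hj with rfl | rfl | rfl
    · exact Or.inl rfl
    · exact Or.inr (Or.inl rfl)
    · exact Or.inr (Or.inr rfl)
  have keyU : ∀ L : List (Equiv.Perm F), (∀ g ∈ L, g ∈ r '' ({i}ᶜ : Set (Fin 4))) →
      L.prod u = u → Even L.length :=
    fun L hL hfix => key L (fun g hg => hS3 g (hL g hg)) u hfix
  have paru : ∀ L L' : List (Equiv.Perm F), (∀ g ∈ L, g ∈ r '' ({i}ᶜ : Set (Fin 4))) →
      (∀ g ∈ L', g ∈ r '' ({i}ᶜ : Set (Fin 4))) →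
      L.prod u = L'.prod u → (Even L.length ↔ Even L'.length) := by
    intro L L' hL hL' heq
    have hW : ((L.reverse ++ L').prod) u = u := by
      rw [List.prod_append, stmt3_reverse_prod_inv L (fun p hp => hSsq p (hL p hp)),
        Equiv.Perm.mul_apply, ← heq]
      simp
    have := keyU (L.reverse ++ L') (fun g hg => by
      rcases List.mem_append.1 hg with h | h
      exacts [hL g (List.mem_reverse.1 h), hL' g h]) hW
    rw [List.length_append, List.length_reverse, Nat.even_add] at this
    exact this
  refine ⟨fun v => if (∃ L : List (Equiv.Perm F),
      (∀ g ∈ L, g ∈ r '' ({i}ᶜ : Set (Fin 4))) ∧ Even L.length ∧ v = L.prod u) then 0 else 1, ?_⟩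
  intro j hj x hx
  obtain ⟨g, hg, rfl⟩ := hx
  obtain ⟨Lx, hLx, rfl⟩ := stmt3_mem_closure_list hSsq hg
  have hjS : r j ∈ r '' ({i}ᶜ : Set (Fin 4)) := ⟨j, hj, rfl⟩
  have hcons : r j (Lx.prod u) = ((r j :: Lx).prod) u := by
    rw [List.prod_cons, Equiv.Perm.mul_apply]
  have hconsL : ∀ g ∈ (r j :: Lx), g ∈ r '' ({i}ᶜ : Set (Fin 4)) := by
    intro g hg'
    rcases List.mem_cons.1 hg' with rfl | h
    exacts [hjS, hLx g h]
  by_cases hE : Even Lx.length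
  · have hx0 : ∃ L : List (Equiv.Perm F), (∀ g ∈ L, g ∈ r '' ({i}ᶜ : Set (Fin 4))) ∧
        Even L.length ∧ Lx.prod u = L.prod u := ⟨Lx, hLx, hE, rfl⟩
    have hx1 : ¬ ∃ L : List (Equiv.Perm F), (∀ g ∈ L, g ∈ r '' ({i}ᶜ : Set (Fin 4))) ∧
        Even L.length ∧ r j (Lx.prod u) = L.prod u := by
      rintro ⟨L', hL', hE', heq⟩
      rw [hcons] at heq
      have := paru L' (r j :: Lx) hL' hconsL heq.symm
      rw [List.length_cons, Nat.even_add_one] at this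
      exact (this.1 hE') hE
    simp only [if_pos hx0, if_neg hx1]
    decide
  · have hx0 : ¬ ∃ L : List (Equiv.Perm F), (∀ g ∈ L, g ∈ r '' ({i}ᶜ : Set (Fin 4))) ∧
        Even L.length ∧ Lx.prod u = L.prod u := by
      rintro ⟨L', hL', hE', heq⟩
      exact hE ((paru L' Lx hL' hLx heq.symm).1 hE')
    have hx1 : ∃ L : List (Equiv.Perm F), (∀ g ∈ L, g ∈ r '' ({i}ᶜ : Set (Fin 4))) ∧
        Even L.length ∧ r j (Lx.prod u) = L.prod u :=
      ⟨r j :: Lx, hconsL, by rw [List.length_cons]; exact Nat.even_add_one.2 hE, hcons⟩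
    simp only [if_neg hx0, if_pos hx1]
    decide
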